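/- Let f, {f_n} be proper convex lower semicontinuous functions on ℝ^d such that the slopes s_{f_n} epigraphically converge to s_f, and suppose f_u(x̄) ∈ ℝ for some x̄ ∈ dom s_f. Then s_{f_u}(x) ≤ s_f(x) for all x ∈ ℝ^d, where f_u is the upper epigraphical limit of {f_n}. -/

import Mathlib

open Filter Topology MeasureTheory Set Metric RealInnerProductSpace
open scoped ENNReal NNReal

noncomputable section

def Proper {d : ℕ} (f : EuclideanSpace ℝ (Fin d) → EReal) : Prop :=
  (∀ x, f x ≠ ⊥) ∧ ∃ x, f x ≠ ⊤

def ConvexFn {d : ℕ} (f : EuclideanSpace ℝ (Fin d) → EReal) : Prop :=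
  Convex ℝ {p : EuclideanSpace ℝ (Fin d) × ℝ | f p.1 ≤ (p.2 : EReal)}

def Subdiff {d : ℕ} (f : EuclideanSpace ℝ (Fin d) → EReal) (x : EuclideanSpace ℝ (Fin d)) :
    Set (EuclideanSpace ℝ (Fin d)) :=
  {v | f x ≠ ⊤ ∧ ∀ y, f x + ((⟪v, y - x⟫ : ℝ) : EReal) ≤ f y}

def slopeFn {d : ℕ} (f : EuclideanSpace ℝ (Fin d) → EReal) (x : EuclideanSpace ℝ (Fin d)) : EReal :=
  sInf ((fun v => (‖v‖ : EReal)) '' Subdiff f x)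

def eLiminf {d : ℕ} (φ : ℕ → EuclideanSpace ℝ (Fin d) → EReal)
    (x : EuclideanSpace ℝ (Fin d)) : EReal :=
  ⨅ (u : ℕ → EuclideanSpace ℝ (Fin d)) (_ : Tendsto u atTop (𝓝 x)),
    Filter.liminf (fun n => φ n (u n)) atTop

def eLimsup {d : ℕ} (φ : ℕ → EuclideanSpace ℝ (Fin d) → EReal)
    (x : EuclideanSpace ℝ (Fin d)) : EReal :=
  ⨅ (u : ℕ → EuclideanSpace ℝ (Fin d)) (_ : Tendsto u atTop (𝓝 x)),
    Filter.limsup (fun n => φ n (u n)) atTop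

def EpiConv {d : ℕ} (φ : ℕ → EuclideanSpace ℝ (Fin d) → EReal)
    (ψ : EuclideanSpace ℝ (Fin d) → EReal) : Prop :=
  ∀ x, eLimsup φ x ≤ ψ x ∧ ψ x ≤ eLiminf φ x

def edom {d : ℕ} (h : EuclideanSpace ℝ (Fin d) → EReal) : Set (EuclideanSpace ℝ (Fin d)) :=
  {x | h x ≠ ⊤}

def rdom {d : ℕ} (h : EuclideanSpace ℝ (Fin d) → EReal) : Set (EuclideanSpace ℝ (Fin d)) :=
  {x | h x ≠ ⊤ ∧ h x ≠ ⊥}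

def domSub {d : ℕ} (f : EuclideanSpace ℝ (Fin d) → EReal) : Set (EuclideanSpace ℝ (Fin d)) :=
  {x | (Subdiff f x).Nonempty}

def erealToENNReal (x : EReal) : ℝ≥0∞ :=
  if x = ⊤ then ⊤ else ENNReal.ofReal x.toReal


/-- The limsup of an `EReal`-valued sequence is a cluster point of the sequence. -/
lemma mapClusterPt_limsup_aux (a : ℕ → EReal) :
    MapClusterPt (Filter.limsup a atTop) atTop a := by
  set L := Filter.limsup a atTop with hL
  rcases eq_or_ne L ⊥ with hb | hb
  · have : Tendsto a atTop (𝓝 L) := by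
      rw [hb]
      refine tendsto_order.2 ⟨fun l hl => absurd hl not_lt_bot, fun c hc => ?_⟩
      exact eventually_lt_of_limsup_lt (by rw [← hL, hb]; exact hc)
    exact this.mapClusterPt
  rcases eq_or_ne L ⊤ with ht | ht
  · rw [mapClusterPt_iff_frequently]
    intro s hs
    rw [ht] at hs
    obtain ⟨l, hl, hsub⟩ := nhds_top_basis.mem_iff.mp hs
    refine (frequently_lt_of_lt_limsup (u := a) (b := l) (by isBoundedDefault) ?_).mono fun n hn => hsub hn
    rw [← hL, ht]; exact hl
  · rw [mapClusterPt_iff_frequently]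
    intro s hs
    obtain ⟨⟨l, c⟩, ⟨hl, hc⟩, hsub⟩ :=
      (nhds_basis_Ioo' ⟨⊥, Ne.bot_lt hb⟩ ⟨⊤, Ne.lt_top ht⟩).mem_iff.mp hs
    have h1 : ∃ᶠ n in atTop, l < a n := frequently_lt_of_lt_limsup (by isBoundedDefault) hl
    have h2 : ∀ᶠ n in atTop, a n < c := eventually_lt_of_limsup_lt hc
    exact (h1.and_eventually h2).mono fun n hn => hsub hn


theorem slope_of_upper_limit_le {d : ℕ} (f : EuclideanSpace ℝ (Fin d) → EReal) (fs : ℕ → EuclideanSpace ℝ (Fin d) → EReal)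
    (hpf : Proper f) (hcf : ConvexFn f) (hlf : LowerSemicontinuous f)
    (hps : ∀ n, Proper (fs n)) (hcs : ∀ n, ConvexFn (fs n))
    (hls : ∀ n, LowerSemicontinuous (fs n))
    (hepi : EpiConv (fun n => slopeFn (fs n)) (slopeFn f))
    (xbar : EuclideanSpace ℝ (Fin d)) (hxbar : xbar ∈ domSub f)
    (hreal : eLimsup fs xbar ≠ ⊤ ∧ eLimsup fs xbar ≠ ⊥) :
    ∀ x, slopeFn (eLimsup fs) x ≤ slopeFn f x := by
  intro x
  rcases eq_or_ne (slopeFn f x) ⊤ with hS | hS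
  · rw [hS]; exact le_top
  have hS0 : (0 : EReal) ≤ slopeFn f x := by
    refine le_sInf fun b hb => ?_
    obtain ⟨v, -, rfl⟩ := hb
    show (0 : EReal) ≤ (‖v‖ : EReal)
    exact_mod_cast norm_nonneg v
  have hSbot : slopeFn f x ≠ ⊥ := fun h => by simp [h] at hS0
  set r : ℝ := (slopeFn f x).toReal with hr
  have hSr : slopeFn f x = (r : EReal) := (EReal.coe_toReal hS hSbot).symm
  have hr0 : 0 ≤ r := by rw [hSr] at hS0; exact_mod_cast hS0
  rw [hSr]
  -- reduce to: ∀ ε > 0, slope ≤ r + ε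
  suffices H : ∀ ε : ℝ, 0 < ε → slopeFn (eLimsup fs) x ≤ ((r + ε : ℝ) : EReal) by
    by_contra hcon
    rw [not_le] at hcon
    obtain ⟨q, hq1, hq2⟩ := EReal.exists_between_coe_real hcon
    have := H (q - r) (by exact_mod_cast sub_pos.mpr (EReal.coe_lt_coe_iff.mp hq1))
    rw [show r + (q - r) = q by ring] at this
    exact absurd (this.trans_lt hq2) (lt_irrefl _)
  intro ε hε
  -- step 1: a sequence u → x with limsup of slopes < r + ε
  have h1 : eLimsup (fun n => slopeFn (fs n)) x < ((r + ε : ℝ) : EReal) := by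
    refine lt_of_le_of_lt (hepi x).1 ?_
    rw [hSr]
    exact_mod_cast lt_add_of_pos_right r hε
  rw [eLimsup, iInf_lt_iff] at h1
  obtain ⟨u, h1⟩ := h1
  rw [iInf_lt_iff] at h1
  obtain ⟨hu, hlim⟩ := h1
  have hev1 : ∀ᶠ n in atTop, slopeFn (fs n) (u n) < ((r + ε : ℝ) : EReal) :=
    eventually_lt_of_limsup_lt hlim
  -- step 2: choose approximate subgradients
  have hVex : ∀ n, ∃ v : EuclideanSpace ℝ (Fin d),
      slopeFn (fs n) (u n) < ((r + ε : ℝ) : EReal) →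
      v ∈ Subdiff (fs n) (u n) ∧ ‖v‖ ≤ r + ε := by
    intro n
    by_cases h : slopeFn (fs n) (u n) < ((r + ε : ℝ) : EReal)
    · rw [slopeFn, sInf_lt_iff] at h
      obtain ⟨b, hb, hblt⟩ := h
      obtain ⟨v, hv, rfl⟩ := hb
      refine ⟨v, fun _ => ⟨hv, le_of_lt ?_⟩⟩
      have : (‖v‖ : EReal) < ((r + ε : ℝ) : EReal) := hblt
      exact_mod_cast this
    · exact ⟨0, fun hc => absurd hc h⟩
  choose V hV using hVex
  have hev2 : ∀ᶠ n in atTop, V n ∈ Subdiff (fs n) (u n) ∧ ‖V n‖ ≤ r + ε :=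
    hev1.mono fun n h => hV n h
  -- step 3: the sequence b → xbar with limsup fs n (b n) finite
  set C : ℝ := (eLimsup fs xbar).toReal with hC
  have h2 : eLimsup fs xbar < ((C + 1 : ℝ) : EReal) := by
    rw [← EReal.coe_toReal hreal.1 hreal.2]
    exact_mod_cast lt_add_one C
  rw [eLimsup, iInf_lt_iff] at h2
  obtain ⟨b, h2⟩ := h2
  rw [iInf_lt_iff] at h2
  obtain ⟨hb, hblim⟩ := h2
  have hev3 : ∀ᶠ n in atTop, fs n (b n) < ((C + 1 : ℝ) : EReal) :=
    eventually_lt_of_limsup_lt hblim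
  -- step 4: bound ‖b n - u n‖
  set K : ℝ := ‖xbar - x‖ + 1 with hK
  have hK0 : 0 ≤ K := by positivity
  have hev4 : ∀ᶠ n in atTop, ‖b n - u n‖ ≤ K := by
    have ht : Tendsto (fun n => ‖b n - u n‖) atTop (𝓝 ‖xbar - x‖) := ((hb.sub hu).norm)
    have : ∀ᶠ n in atTop, ‖b n - u n‖ < K :=
      ht.eventually (Filter.Tendsto.eventually_lt_const (by simp [hK]) tendsto_id)
    exact this.mono fun n h => h.le
  -- step 5: fs n (u n) eventually bounded above
  set M : ℝ := C + 1 + (r + ε) * K with hM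
  have hev5 : ∀ᶠ n in atTop, fs n (u n) ≤ (M : EReal) := by
    filter_upwards [hev2, hev3, hev4] with n h2 h3 h4
    obtain ⟨⟨hnetop, hsub⟩, hVn⟩ := h2
    have hnebot : fs n (u n) ≠ ⊥ := (hps n).1 (u n)
    set t : ℝ := (fs n (u n)).toReal with htt
    have htr : fs n (u n) = (t : EReal) := (EReal.coe_toReal hnetop hnebot).symm
    set c : ℝ := ⟪V n, b n - u n⟫ with hcc
    have hineq : ((t + c : ℝ) : EReal) ≤ fs n (b n) := by
      rw [EReal.coe_add, ← htr]; exact hsub (b n)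
    have h5 : t + c < C + 1 := by exact_mod_cast hineq.trans_lt h3
    have hcb : |c| ≤ (r + ε) * K := by
      calc |c| ≤ ‖V n‖ * ‖b n - u n‖ := abs_real_inner_le_norm _ _
        _ ≤ (r + ε) * K := by
            apply mul_le_mul hVn h4 (norm_nonneg _) (by linarith)
    rw [htr, EReal.coe_le_coe_iff]
    have := abs_le.mp hcb
    linarith [this.1, this.2]
  -- step 6: limsup of fs n (u n)
  set L : EReal := Filter.limsup (fun n => fs n (u n)) atTop with hLdef
  have hLle : L ≤ (M : EReal) := limsup_le_of_le (by isBoundedDefault) hev5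
  have hgxle : eLimsup fs x ≤ L := by
    rw [eLimsup]
    exact (iInf_le _ u).trans (iInf_le _ hu)
  have hgxtop : eLimsup fs x ≠ ⊤ :=
    ((hgxle.trans hLle).trans_lt (EReal.coe_lt_top M)).ne
  -- step 7: subsequence realizing L
  obtain ⟨φ₁, hφ₁, hφ₁tend⟩ :=
    TopologicalSpace.FirstCountableTopology.tendsto_subseq
      (mapClusterPt_limsup_aux (fun n => fs n (u n)))
  -- step 8: extract convergent subgradients
  have hfreq : ∃ᶠ k in atTop, V (φ₁ k) ∈ closedBall (0 : EuclideanSpace ℝ (Fin d)) (r + ε) := by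
    refine (hφ₁.tendsto_atTop.eventually hev2).frequently.mono fun k hk => ?_
    rw [mem_closedBall, dist_zero_right]
    exact hk.2
  obtain ⟨w, hwball, φ₂, hφ₂, hφ₂tend⟩ :=
    (isCompact_closedBall (0 : EuclideanSpace ℝ (Fin d)) (r + ε)).tendsto_subseq' hfreq
  set φ : ℕ → ℕ := φ₁ ∘ φ₂ with hφdef
  have hφ : StrictMono φ := hφ₁.comp hφ₂
  have hφtop : Tendsto φ atTop atTop := hφ.tendsto_atTop
  have haL : Tendsto (fun k => fs (φ k) (u (φ k))) atTop (𝓝 L) :=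
    hφ₁tend.comp hφ₂.tendsto_atTop
  have hVw : Tendsto (fun k => V (φ k)) atTop (𝓝 w) := hφ₂tend
  have huφ : Tendsto (fun k => u (φ k)) atTop (𝓝 x) := hu.comp hφtop
  have hev2φ : ∀ᶠ k in atTop, V (φ k) ∈ Subdiff (fs (φ k)) (u (φ k)) ∧ ‖V (φ k)‖ ≤ r + ε :=
    hφtop.eventually hev2
  -- step 9: w is a subgradient of eLimsup fs at x
  have hmem : w ∈ Subdiff (eLimsup fs) x := by
    refine ⟨hgxtop, fun y => ?_⟩
    have hgy : eLimsup fs y = ⨅ (t : ℕ → EuclideanSpace ℝ (Fin d))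
        (_ : Tendsto t atTop (𝓝 y)), Filter.limsup (fun n => fs n (t n)) atTop := rfl
    rw [hgy]
    refine le_iInf fun t => le_iInf fun htt => ?_
    rcases eq_or_ne L ⊥ with hLbot | hLbot
    · have : eLimsup fs x = ⊥ := le_bot_iff.mp (hLbot ▸ hgxle)
      rw [this]
      simp
    · -- L is real
      have hLr : L = ((L.toReal : ℝ) : EReal) :=
        (EReal.coe_toReal ((hLle.trans_lt (EReal.coe_lt_top M)).ne) hLbot).symm
      set c : ℝ := ⟪w, y - x⟫ with hc
      have htφ : Tendsto (fun k => t (φ k)) atTop (𝓝 y) := htt.comp hφtop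
      have hctend : Tendsto (fun k => (⟪V (φ k), t (φ k) - u (φ k)⟫ : ℝ)) atTop (𝓝 c) :=
        hVw.inner (htφ.sub huφ)
      have hsum : Tendsto (fun k => fs (φ k) (u (φ k)) +
          ((⟪V (φ k), t (φ k) - u (φ k)⟫ : ℝ) : EReal)) atTop (𝓝 (L + (c : EReal))) := by
        have hpair : Tendsto (fun k => (fs (φ k) (u (φ k)),
            ((⟪V (φ k), t (φ k) - u (φ k)⟫ : ℝ) : EReal))) atTop (𝓝 (L, (c : EReal))) :=
          haL.prodMk_nhds (EReal.tendsto_coe.mpr hctend)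
        exact (EReal.continuousAt_add (p := (L, (c : EReal)))
          (Or.inr (EReal.coe_ne_bot c)) (Or.inr (EReal.coe_ne_top c))).tendsto.comp hpair
      have hsub : Filter.limsup (fun k => fs (φ k) (t (φ k))) atTop ≥ L + (c : EReal) := by
        rw [← hsum.limsup_eq]
        refine limsup_le_limsup ?_
        filter_upwards [hev2φ] with k hk
        exact hk.1.2 (t (φ k))
      have hfull : Filter.limsup (fun k => fs (φ k) (t (φ k))) atTop ≤
          Filter.limsup (fun n => fs n (t n)) atTop := by
        have : (fun k => fs (φ k) (t (φ k))) = (fun n => fs n (t n)) ∘ φ := rfl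
        rw [this, limsup_comp]
        exact limsup_le_limsup_of_le hφtop
      calc eLimsup fs x + ((c : ℝ) : EReal) ≤ L + (c : EReal) := add_le_add_left hgxle _
        _ ≤ Filter.limsup (fun k => fs (φ k) (t (φ k))) atTop := hsub
        _ ≤ Filter.limsup (fun n => fs n (t n)) atTop := hfull
  -- conclude
  calc slopeFn (eLimsup fs) x ≤ (‖w‖ : EReal) := sInf_le (mem_image_of_mem _ hmem)
    _ ≤ ((r + ε : ℝ) : EReal) := by
        rw [EReal.coe_le_coe_iff]
        rwa [mem_closedBall, dist_zero_right] at hwball
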